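/- Let L be a countable first-order language and T a satisfiable complete L-theory that is small. Let (φ_i)_{i ∈ I} be an ∞-definable equivalence relation over ∅ modulo T on n-tuples which is coarser than equality of types. Suppose M is a model of T and ā, b̄ are n-tuples of M with M ⊭ φ_{i₀}(ā, b̄) for some i₀ ∈ I. Then there exist L-formulas φ(x̄) and ψ(x̄) in n free variables such that: M ⊨ φ(ā) and M ⊨ ψ(b̄); for every model M' of T and every n-tuple c̄ of M', M' ⊨ φ(c̄) ∨ ψ(c̄); and for every model M' of T and all n-tuples c̄, d̄ of M', if M' ⊨ φ(c̄) and M' ⊨ ψ(d̄) then M' ⊭ φ_i(c̄, d̄) for some i ∈ I. -/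

import Mathlib

open FirstOrder FirstOrder.Language FirstOrder.Language.Theory Set

universe u v w u'

/-- A family `φ : I → L.Formula (Fin n ⊕ Fin n)` of formulas in a pair of `n`-tuples of free
variables is an ∞-definable equivalence relation over `∅` modulo `T`: in every model of `T`,
the relation defined by the simultaneous satisfaction of all the `φ i` is reflexive, symmetric
and transitive. -/
def IsInfEqRel {L : FirstOrder.Language.{v, w}} (T : L.Theory) {n : ℕ} {I : Type u'}
    (φ : I → L.Formula (Fin n ⊕ Fin n)) : Prop :=
  (∀ (M : Type u) [L.Structure M] [Nonempty M], M ⊨ T →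
    ∀ (a : Fin n → M) (i : I), (φ i).Realize (Sum.elim a a)) ∧
  (∀ (M : Type u) [L.Structure M] [Nonempty M], M ⊨ T →
    ∀ a b : Fin n → M, (∀ i, (φ i).Realize (Sum.elim a b)) →
      ∀ i, (φ i).Realize (Sum.elim b a)) ∧
  (∀ (M : Type u) [L.Structure M] [Nonempty M], M ⊨ T →
    ∀ a b c : Fin n → M, (∀ i, (φ i).Realize (Sum.elim a b)) →
      (∀ i, (φ i).Realize (Sum.elim b c)) → ∀ i, (φ i).Realize (Sum.elim a c))

/-- A single formula `ψ(x̄, ȳ)` defines an equivalence relation modulo `T`: in every model of `T`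
the binary relation on `n`-tuples that it defines is reflexive, symmetric and transitive. -/
def DefinesEqRel {L : FirstOrder.Language.{v, w}} (T : L.Theory) {n : ℕ}
    (ψ : L.Formula (Fin n ⊕ Fin n)) : Prop :=
  ∀ (M : Type u) [L.Structure M] [Nonempty M], M ⊨ T →
    (∀ a : Fin n → M, ψ.Realize (Sum.elim a a)) ∧
    (∀ a b : Fin n → M, ψ.Realize (Sum.elim a b) → ψ.Realize (Sum.elim b a)) ∧
    (∀ a b c : Fin n → M, ψ.Realize (Sum.elim a b) → ψ.Realize (Sum.elim b c) →
      ψ.Realize (Sum.elim a c))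

/-- The relation defined by the family `φ` is coarser than equality of types over `∅`:
in every model of `T`, any two `n`-tuples satisfying exactly the same `L`-formulas are related. -/
def CoarserThanTypeEq {L : FirstOrder.Language.{v, w}} (T : L.Theory) {n : ℕ} {I : Type u'}
    (φ : I → L.Formula (Fin n ⊕ Fin n)) : Prop :=
  ∀ (M : Type u) [L.Structure M] [Nonempty M], M ⊨ T →
    ∀ a b : Fin n → M, (∀ θ : L.Formula (Fin n), θ.Realize a ↔ θ.Realize b) →
      ∀ i, (φ i).Realize (Sum.elim a b)



namespace SmallSepAux

variable {L : FirstOrder.Language.{v, w}} {T : L.Theory} {α : Type*}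

theorem eq_of_subset {p q : T.CompleteType α} (h : ∀ σ, σ ∈ p → σ ∈ q) : p = q := by
  refine SetLike.ext fun σ => ⟨h σ, fun hq => ?_⟩
  rcases p.mem_or_not_mem σ with hp | hp
  · exact hp
  · exact absurd ((q.not_mem_iff σ).1 (h _ hp)) (not_not_intro hq)

theorem mem_iff_models (p : T.CompleteType α) (σ : L[[α]].Sentence) :
    σ ∈ p ↔ (p : L[[α]].Theory) ⊨ᵇ σ := p.isMaximal.mem_iff_models σ

theorem inf_mem_iff (p : T.CompleteType α) {σ τ : L[[α]].Sentence} :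
    σ ⊓ τ ∈ p ↔ σ ∈ p ∧ τ ∈ p := by
  simp only [mem_iff_models, Theory.models_sentence_iff]
  constructor
  · intro h
    exact ⟨fun M => (Formula.realize_inf.1 (h M)).1, fun M => (Formula.realize_inf.1 (h M)).2⟩
  · rintro ⟨h1, h2⟩ M
    exact Formula.realize_inf.2 ⟨h1 M, h2 M⟩

theorem top_mem (p : T.CompleteType α) : (⊤ : L[[α]].Sentence) ∈ p := by
  rw [mem_iff_models, Theory.models_sentence_iff]
  intro M
  exact Formula.realize_top.2 trivial

theorem bot_not_mem (p : T.CompleteType α) : (⊥ : L[[α]].Sentence) ∉ p := by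
  intro h
  obtain ⟨M⟩ := p.isMaximal.1
  exact Formula.realize_bot.1 (Theory.realize_sentence_of_mem (M := M) (p : L[[α]].Theory) h)

theorem sup_mem_iff (p : T.CompleteType α) {σ τ : L[[α]].Sentence} :
    σ ⊔ τ ∈ p ↔ σ ∈ p ∨ τ ∈ p := by
  constructor
  · intro h
    by_contra hc
    push_neg at hc
    obtain ⟨M⟩ := p.isMaximal.1
    have h1 := Theory.realize_sentence_of_mem (M := M) (p : L[[α]].Theory) ((p.not_mem_iff σ).2 hc.1)
    have h2 := Theory.realize_sentence_of_mem (M := M) (p : L[[α]].Theory) ((p.not_mem_iff τ).2 hc.2)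
    have h3 := Theory.realize_sentence_of_mem (M := M) (p : L[[α]].Theory) h
    rw [Sentence.realize_not] at h1 h2
    rcases Formula.realize_sup.1 h3 with h | h
    · exact h1 h
    · exact h2 h
  · rintro (h | h) <;> rw [mem_iff_models, Theory.models_sentence_iff] <;> intro M <;>
      refine Formula.realize_sup.2 ?_
    · exact Or.inl (Theory.realize_sentence_of_mem (p : L[[α]].Theory) h)
    · exact Or.inr (Theory.realize_sentence_of_mem (p : L[[α]].Theory) h)

theorem foldr_sup_mem_iff (p : T.CompleteType α) (l : List (L[[α]].Sentence)) :
    l.foldr (· ⊔ ·) ⊥ ∈ p ↔ ∃ σ ∈ l, σ ∈ p := by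
  induction l with
  | nil => simp [bot_not_mem p]
  | cons a l ih => simp [sup_mem_iff p, ih]


section TypeOf

variable {M : Type*} [L.Structure M] [Nonempty M] [M ⊨ T]
variable {N : Type*} [L.Structure N] [Nonempty N] [N ⊨ T]

theorem typeOf_eq_typeOf_iff {e : α → M} {e' : α → N} :
    T.typeOf e = T.typeOf e' ↔ ∀ θ : L.Formula α, θ.Realize e ↔ θ.Realize e' := by
  constructor
  · intro h θ
    rw [← CompleteType.formula_mem_typeOf (T := T), ← CompleteType.formula_mem_typeOf (T := T), h]
  · intro h
    refine SetLike.ext fun σ => ?_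
    rw [CompleteType.mem_typeOf, CompleteType.mem_typeOf]
    exact h _

theorem realize_iff_of_typeOf_eq {e : α → M} {e' : α → N}
    (h : T.typeOf e = T.typeOf e') (θ : L.Formula α) : θ.Realize e ↔ θ.Realize e' :=
  typeOf_eq_typeOf_iff.1 h θ

/-- Pushing a sentence with constants from `α` forward along a map `f : α → β`. -/
noncomputable def sMap (f : α → β) (σ : L[[α]].Sentence) : L[[β]].Sentence :=
  Formula.equivSentence ((Formula.equivSentence.symm σ).relabel f)

theorem sMap_mem_typeOf {β : Type*} {f : α → β} {σ : L[[α]].Sentence} {v : β → M} :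
    sMap f σ ∈ T.typeOf v ↔ σ ∈ T.typeOf (v ∘ f) := by
  rw [sMap, CompleteType.formula_mem_typeOf, CompleteType.mem_typeOf, Formula.realize_relabel]

theorem typeOf_comp_eq_of_typeOf_eq {β : Type*} {e : α → M} {e' : α → N}
    (h : T.typeOf e = T.typeOf e') (f : β → α) : T.typeOf (e ∘ f) = T.typeOf (e' ∘ f) := by
  refine SetLike.ext fun σ => ?_
  rw [← sMap_mem_typeOf, ← sMap_mem_typeOf, h]

end TypeOf

section Topology

open TopologicalSpace

variable (T α) in
/-- The basic (cl)open set of the type-space topology given by a sentence. -/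
def basicOpen (σ : L[[α]].Sentence) : Set (T.CompleteType α) := {p | σ ∈ p}

instance : TopologicalSpace (T.CompleteType α) :=
  generateFrom (Set.range (basicOpen T α))

theorem isOpen_basicOpen (σ : L[[α]].Sentence) : IsOpen (basicOpen T α σ) :=
  TopologicalSpace.GenerateOpen.basic _ ⟨σ, rfl⟩

theorem compl_basicOpen (σ : L[[α]].Sentence) :
    (basicOpen T α σ)ᶜ = basicOpen T α σ.not :=
  CompleteType.compl_setOf_mem

theorem isClopen_basicOpen (σ : L[[α]].Sentence) : IsClopen (basicOpen T α σ) := by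
  constructor
  · rw [← isOpen_compl_iff, compl_basicOpen]
    exact isOpen_basicOpen _
  · exact isOpen_basicOpen σ

theorem basicOpen_top : basicOpen T α ⊤ = Set.univ :=
  Set.eq_univ_of_forall fun p => top_mem p

theorem basicOpen_inf (σ τ : L[[α]].Sentence) :
    basicOpen T α (σ ⊓ τ) = basicOpen T α σ ∩ basicOpen T α τ :=
  Set.ext fun p => inf_mem_iff p

theorem isBasis_basicOpen :
    IsTopologicalBasis (Set.range (basicOpen T α)) := by
  refine ⟨?_, ?_, rfl⟩
  · rintro t₁ ⟨σ, rfl⟩ t₂ ⟨τ, rfl⟩ x hx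
    exact ⟨basicOpen T α (σ ⊓ τ), ⟨σ ⊓ τ, rfl⟩, by rwa [basicOpen_inf], by rw [basicOpen_inf]⟩
  · refine Set.eq_univ_of_forall fun p => ?_
    exact ⟨basicOpen T α ⊤, ⟨⊤, rfl⟩, top_mem p⟩

instance : T2Space (T.CompleteType α) := by
  constructor
  intro p q hpq
  have : ∃ σ, σ ∈ p ∧ σ ∉ q := by
    by_contra hc
    push_neg at hc
    exact hpq (eq_of_subset hc)
  obtain ⟨σ, hp, hq⟩ := this
  refine ⟨basicOpen T α σ, basicOpen T α σ.not, isOpen_basicOpen _, isOpen_basicOpen _,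
    hp, (q.not_mem_iff σ).2 hq, ?_⟩
  rw [Set.disjoint_left]
  intro r h1 h2
  exact absurd h1 ((r.not_mem_iff σ).1 h2)

theorem exists_completeType_supset {S : L[[α]].Theory}
    (h : ((L.lhomWithConstants α).onTheory T ∪ S).IsSatisfiable) :
    ∃ p : T.CompleteType α, S ⊆ ↑p := by
  have := (CompleteType.setOf_subset_eq_empty_iff (T := T) S).not.2 (not_not_intro h)
  rw [← Ne, ← nonempty_iff_ne_empty] at this
  obtain ⟨p, hp⟩ := this
  exact ⟨p, hp⟩

instance : CompactSpace (T.CompleteType α) := by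
  refine ⟨isCompact_of_finite_subfamily_closed ?_⟩
  intro ι Z hZc hZe
  rcases isEmpty_or_nonempty ι with hι | hι
  · refine ⟨∅, ?_⟩
    simpa [Set.iInter_of_empty, Set.eq_empty_iff_forall_notMem] using hZe
  classical
  -- each closed set is the intersection of the basic sets containing it
  have hbasic : ∀ (i : ι) (p : T.CompleteType α), p ∉ Z i →
      ∃ σ, Z i ⊆ basicOpen T α σ ∧ p ∉ basicOpen T α σ := by
    intro i p hp
    obtain ⟨s, ⟨σ, rfl⟩, hps, hsub⟩ := isBasis_basicOpen.exists_subset_of_mem_open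
      (Set.mem_compl hp) (hZc i).isOpen_compl
    exact ⟨σ.not, fun q hq => (q.not_mem_iff σ).2 fun hmem => hsub hmem hq,
      fun hcon => (p.not_mem_iff σ).1 hcon hps⟩
  -- the theory of all basic supersets
  set Γ : Set (L[[α]].Sentence) := {σ | ∃ i, Z i ⊆ basicOpen T α σ} with hΓ
  have hempty : {p : T.CompleteType α | Γ ⊆ ↑p} = ∅ := by
    rw [Set.eq_empty_iff_forall_notMem]
    intro p hp
    have : p ∈ ⋂ i, Z i := by
      refine Set.mem_iInter.2 fun i => ?_
      by_contra hpz
      obtain ⟨σ, hsub, hpσ⟩ := hbasic i p hpz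
      exact hpσ (hp ⟨i, hsub⟩)
    rw [Set.eq_empty_iff_forall_notMem] at hZe
    exact hZe p (by simpa using this)
  rw [CompleteType.setOf_subset_eq_empty_iff] at hempty
  rw [Theory.isSatisfiable_iff_isFinitelySatisfiable] at hempty
  rw [Theory.IsFinitelySatisfiable] at hempty
  push_neg at hempty
  obtain ⟨T₀, hT₀sub, hT₀⟩ := hempty
  -- choose an index for each sentence of T₀ coming from Γ
  have hchoice : ∀ σ : L[[α]].Sentence, ∃ i : ι, σ ∈ Γ → Z i ⊆ basicOpen T α σ := by
    intro σ
    by_cases hσ : σ ∈ Γ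
    · obtain ⟨i, hi⟩ := hσ
      exact ⟨i, fun _ => hi⟩
    · exact ⟨Classical.arbitrary ι, fun h => absurd h hσ⟩
  choose g hg using hchoice
  refine ⟨T₀.image g, ?_⟩
  rw [Set.eq_empty_iff_forall_notMem]
  intro p hp
  simp only [Set.mem_inter_iff, Set.mem_iInter, Finset.mem_image] at hp
  refine hT₀ (IsSatisfiable.mono p.isMaximal.1 fun σ hσ => ?_)
  rcases hT₀sub hσ with hσT | hσΓ
  · exact p.subset hσT
  · have : p ∈ Z (g σ) := hp.2 (g σ) ⟨σ, hσ, rfl⟩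
    exact hg σ hσΓ this

theorem exists_eq_basicOpen {U : Set (T.CompleteType α)} (h : IsClopen U) :
    ∃ σ, U = basicOpen T α σ := by
  classical
  have hcov : U ⊆ ⋃ i : {σ : L[[α]].Sentence // basicOpen T α σ ⊆ U}, basicOpen T α i.1 := by
    intro p hp
    obtain ⟨s, ⟨σ, rfl⟩, hps, hsub⟩ := isBasis_basicOpen.exists_subset_of_mem_open hp h.isOpen
    exact Set.mem_iUnion.2 ⟨⟨σ, hsub⟩, hps⟩
  obtain ⟨t, ht⟩ := (h.isClosed.isCompact).elim_finite_subcover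
    (fun i : {σ : L[[α]].Sentence // basicOpen T α σ ⊆ U} => basicOpen T α i.1)
    (fun i => isOpen_basicOpen i.1) hcov
  set l : List (L[[α]].Sentence) := t.toList.map Subtype.val with hl
  refine ⟨l.foldr (· ⊔ ·) ⊥, Set.ext fun p => ?_⟩
  rw [basicOpen, Set.mem_setOf_eq, foldr_sup_mem_iff]
  constructor
  · intro hp
    obtain ⟨i, hit, hpi⟩ := Set.mem_iUnion₂.1 (ht hp)
    exact ⟨i.1, List.mem_map_of_mem (Finset.mem_toList.2 hit), hpi⟩
  · rintro ⟨τ, hτl, hτp⟩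
    obtain ⟨i, hit, rfl⟩ := List.mem_map.1 hτl
    exact i.2 hτp

end Topology


section Realize

open Cardinal

variable [Countable L.Symbols]

theorem card_le_aleph0' : L.card ≤ ℵ₀ := by
  rw [Language.card]
  exact Cardinal.mk_le_aleph0

/-- Every complete type over `∅` in finitely many variables is realized in a model
lying in any given universe (for a countable language). -/
theorem exists_realize_in_universe {γ : Type} [Finite γ] (p : T.CompleteType γ) :
    ∃ (N : Theory.ModelType.{v, w, u} T) (e : γ → N), T.typeOf e = p := by
  obtain ⟨N₀, hN₀⟩ := T.exists_modelType_is_realized_in p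
  rw [Theory.realizedTypes, Set.mem_range] at hN₀
  obtain ⟨e₀, he₀⟩ := hN₀
  -- first find a countable model realizing `p`
  have hstep : ∃ (N₁ : Theory.ModelType.{v, w, max v w} T) (e₁ : γ → N₁),
      Countable N₁ ∧ T.typeOf e₁ = p := by
    rcases finite_or_infinite N₀ with hfin | hinf
    · exact ⟨N₀, e₀, Finite.to_countable, he₀⟩
    · obtain ⟨S, hsub, hcard⟩ := exists_elementarySubstructure_card_eq L (Set.range e₀)
        (ℵ₀ : Cardinal.{max v w}) le_rfl
        (by
          have : Countable (Set.range e₀) := Set.countable_range _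
          exact Cardinal.lift_le.2 Cardinal.mk_le_aleph0)
        (Cardinal.lift_le.2 card_le_aleph0')
        (Cardinal.lift_le.2 (Cardinal.aleph0_le_mk N₀))
      rw [Cardinal.lift_inj] at hcard
      have hSinf : Infinite S := Cardinal.infinite_iff.2 hcard.ge
      have hScount : Countable S := Cardinal.mk_le_aleph0_iff.1 hcard.le
      haveI : Nonempty S := inferInstance
      refine ⟨(ModelType.of T S), fun g => ⟨e₀ g, hsub ⟨g, rfl⟩⟩, hScount, ?_⟩
      rw [← he₀]
      refine typeOf_eq_typeOf_iff.2 ?_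
      intro θ
      have := S.subtype.map_formula θ (fun g => (⟨e₀ g, hsub ⟨g, rfl⟩⟩ : S))
      refine this.symm.trans ?_
      exact iff_of_eq (congrArg _ (funext fun g => rfl))
  obtain ⟨N₁, e₁, hcount, he₁⟩ := hstep
  -- now transport the countable model into universe `u`
  obtain ⟨f⟩ := nonempty_embedding_nat N₁
  let eqv : N₁ ≃ ULift.{u} (Set.range f) :=
    (Equiv.ofInjective f f.injective).trans Equiv.ulift.symm
  letI : L.Structure (ULift.{u} (Set.range f)) := eqv.inducedStructure
  let g : N₁ ≃[L] ULift.{u} (Set.range f) := Equiv.inducedStructureEquiv eqv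
  haveI : Nonempty (ULift.{u} (Set.range f)) := Nonempty.map eqv inferInstance
  haveI : (ULift.{u} (Set.range f)) ⊨ T := StrongHomClass.theory_model g
  refine ⟨ModelType.of T (ULift.{u} (Set.range f)), g ∘ e₁, ?_⟩
  rw [← he₁, typeOf_eq_typeOf_iff]
  intro θ
  exact StrongHomClass.realize_formula g θ

end Realize


section Joint

open Cardinal

variable [Countable L.Symbols]

theorem jointly_realized (hcomp : T.IsComplete) {γ₁ γ₂ : Type} [Finite γ₁] [Finite γ₂]
    (p : T.CompleteType γ₁) (q : T.CompleteType γ₂) :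
    ∃ (N : Theory.ModelType.{v, w, u} T) (e₁ : γ₁ → N) (e₂ : γ₂ → N),
      T.typeOf e₁ = p ∧ T.typeOf e₂ = q := by
  classical
  -- the joint theory in the language with constants from `γ₁ ⊕ γ₂`
  set Sjoint : L[[γ₁ ⊕ γ₂]].Theory :=
    sMap Sum.inl '' (p : Set (L[[γ₁]].Sentence)) ∪ sMap Sum.inr '' (q : Set (L[[γ₂]].Sentence))
    with hSjoint
  -- finite approximations
  set Ts : Finset {σ : L[[γ₁]].Sentence // σ ∈ p} → L[[γ₁ ⊕ γ₂]].Theory := fun s =>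
    ((L.lhomWithConstants (γ₁ ⊕ γ₂)).onTheory T ∪
      sMap Sum.inr '' (q : Set (L[[γ₂]].Sentence))) ∪
      (fun σ : {σ : L[[γ₁]].Sentence // σ ∈ p} => sMap Sum.inl σ.1) '' ↑s with hTs
  have hsat : ∀ s, (Ts s).IsSatisfiable := by
    intro s
    obtain ⟨N₂, hN₂⟩ := T.exists_modelType_is_realized_in q
    rw [Theory.realizedTypes, Set.mem_range] at hN₂
    obtain ⟨d, hd⟩ := hN₂
    obtain ⟨N₁, hN₁⟩ := T.exists_modelType_is_realized_in p
    rw [Theory.realizedTypes, Set.mem_range] at hN₁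
    obtain ⟨c, hc⟩ := hN₁
    -- the conjunction of the formulas in `s`
    set Θ : L.Formula γ₁ :=
      (s.toList.map fun σ => Formula.equivSentence.symm σ.1).foldr (· ⊓ ·) ⊤ with hΘ
    have hΘc : Θ.Realize c := by
      rw [hΘ, Formula.Realize, BoundedFormula.realize_foldr_inf]
      intro θ hθ
      obtain ⟨σ, hσs, rfl⟩ := List.mem_map.1 hθ
      have : σ.1 ∈ T.typeOf c := by rw [hc]; exact σ.2
      rwa [CompleteType.mem_typeOf] at this
    -- transfer the existential closure to `N₂`
    have hξ : (Formula.iExs γ₁ (Θ.relabel (Sum.inr : γ₁ → Empty ⊕ γ₁))).Realize (default : Empty → ↑N₂) := by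
      have h1 : (Formula.iExs γ₁ (Θ.relabel (Sum.inr : γ₁ → Empty ⊕ γ₁))).Realize (default : Empty → ↑N₁) := by
        rw [Formula.realize_iExs]
        exact ⟨c, Formula.realize_relabel.2 hΘc⟩
      have h2 := hcomp.realize_sentence_iff (Formula.iExs γ₁ (Θ.relabel (Sum.inr : γ₁ → Empty ⊕ γ₁))) N₁
      have h3 := hcomp.realize_sentence_iff (Formula.iExs γ₁ (Θ.relabel (Sum.inr : γ₁ → Empty ⊕ γ₁))) N₂
      have h4 : (N₁ : Type _) ⊨ Formula.iExs γ₁ (Θ.relabel (Sum.inr : γ₁ → Empty ⊕ γ₁)) := h1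
      exact h3.2 (h2.1 h4)
    rw [Formula.realize_iExs] at hξ
    obtain ⟨c', hc'⟩ := hξ
    have hc'real : Θ.Realize c' := (Formula.realize_relabel (g := Sum.inr)).1 hc'
    -- all sentences of `Ts s` lie in the type of `Sum.elim c' d`
    refine IsSatisfiable.mono (T.typeOf (Sum.elim c' d)).isMaximal.1 ?_
    rintro σ (hσ | hσ)
    · rcases hσ with hσ | hσ
      · exact (T.typeOf (Sum.elim c' d)).subset hσ
      · obtain ⟨τ, hτq, rfl⟩ := hσ
        rw [SetLike.mem_coe, sMap_mem_typeOf, Sum.elim_comp_inr, hd]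
        exact hτq
    · obtain ⟨τ, hτs, rfl⟩ := hσ
      rw [SetLike.mem_coe, sMap_mem_typeOf, Sum.elim_comp_inl, CompleteType.mem_typeOf]
      rw [hΘ, Formula.Realize, BoundedFormula.realize_foldr_inf] at hc'real
      exact hc'real _ (List.mem_map_of_mem (Finset.mem_toList.2 (Finset.mem_coe.1 hτs)))
  have hdir : Directed (· ⊆ ·) Ts := by
    apply Monotone.directed_le
    intro s t hst
    exact Set.union_subset_union subset_rfl (Set.image_mono (Finset.coe_subset.2 hst))
  have hTssat : Theory.IsSatisfiable (⋃ s, Ts s) := (isSatisfiable_directed_union_iff hdir).2 hsat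
  have hcover : (L.lhomWithConstants (γ₁ ⊕ γ₂)).onTheory T ∪ Sjoint ⊆ ⋃ s, Ts s := by
    rintro σ (hσ | hσ)
    · exact Set.mem_iUnion.2 ⟨∅, Or.inl (Or.inl hσ)⟩
    · rcases hσ with ⟨τ, hτ, rfl⟩ | hσ
      · exact Set.mem_iUnion.2 ⟨{⟨τ, hτ⟩}, Or.inr ⟨⟨τ, hτ⟩, by simp, rfl⟩⟩
      · exact Set.mem_iUnion.2 ⟨∅, Or.inl (Or.inr hσ)⟩
  obtain ⟨r, hr⟩ := exists_completeType_supset (hTssat.mono hcover)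
  obtain ⟨N, e, he⟩ := exists_realize_in_universe.{u} r
  refine ⟨N, e ∘ Sum.inl, e ∘ Sum.inr, ?_, ?_⟩
  · refine (eq_of_subset fun σ hσ => ?_).symm
    have h1 : sMap Sum.inl σ ∈ r := hr (Or.inl ⟨σ, SetLike.mem_coe.2 hσ, rfl⟩)
    rw [← he, sMap_mem_typeOf] at h1
    exact h1
  · refine (eq_of_subset fun σ hσ => ?_).symm
    have h1 : sMap Sum.inr σ ∈ r := hr (Or.inr ⟨σ, SetLike.mem_coe.2 hσ, rfl⟩)
    rw [← he, sMap_mem_typeOf] at h1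
    exact h1

end Joint


section Erel

open Cardinal

variable [Countable L.Symbols]
variable {n : ℕ} {I : Type u'}

variable (T) in
/-- The theory expressing that there are realizations of `p` and `q` related by all `φ i`. -/
noncomputable def ErelTheory (φ : I → L.Formula (Fin n ⊕ Fin n))
    (p q : T.CompleteType (Fin n)) : L[[Fin n ⊕ Fin n]].Theory :=
  (L.lhomWithConstants (Fin n ⊕ Fin n)).onTheory T ∪
    ((sMap Sum.inl '' (p : Set (L[[Fin n]].Sentence)) ∪
      sMap Sum.inr '' (q : Set (L[[Fin n]].Sentence))) ∪
      Set.range fun i => Formula.equivSentence (φ i))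

variable (T) in
/-- The ∞-definable relation induced on the space of complete types. -/
noncomputable def Erel (φ : I → L.Formula (Fin n ⊕ Fin n))
    (p q : T.CompleteType (Fin n)) : Prop :=
  (ErelTheory T φ p q).IsSatisfiable

theorem erel_of_realize {φ : I → L.Formula (Fin n ⊕ Fin n)} {p q : T.CompleteType (Fin n)}
    {M₂ : Type*} [L.Structure M₂] [Nonempty M₂] [M₂ ⊨ T] {c d : Fin n → M₂}
    (hc : T.typeOf c = p) (hd : T.typeOf d = q)
    (hφ : ∀ i, (φ i).Realize (Sum.elim c d)) : Erel T φ p q := by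
  refine IsSatisfiable.mono (T.typeOf (Sum.elim c d)).isMaximal.1 ?_
  rintro σ (hσ | hσ)
  · exact (T.typeOf (Sum.elim c d)).subset hσ
  · rcases hσ with (⟨τ, hτ, rfl⟩ | ⟨τ, hτ, rfl⟩) | ⟨i, rfl⟩
    · rw [SetLike.mem_coe, sMap_mem_typeOf, Sum.elim_comp_inl, hc]
      exact hτ
    · rw [SetLike.mem_coe, sMap_mem_typeOf, Sum.elim_comp_inr, hd]
      exact hτ
    · rw [SetLike.mem_coe, CompleteType.formula_mem_typeOf]
      exact hφ i

theorem erel_elim {φ : I → L.Formula (Fin n ⊕ Fin n)} {p q : T.CompleteType (Fin n)}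
    (h : Erel T φ p q) :
    ∃ (N : Theory.ModelType.{v, w, u} T) (c d : Fin n → N),
      T.typeOf c = p ∧ T.typeOf d = q ∧ ∀ i, (φ i).Realize (Sum.elim c d) := by
  obtain ⟨r, hr⟩ := exists_completeType_supset (S :=
    (sMap Sum.inl '' (p : Set (L[[Fin n]].Sentence)) ∪
      sMap Sum.inr '' (q : Set (L[[Fin n]].Sentence))) ∪
      Set.range fun i => Formula.equivSentence (φ i)) h
  obtain ⟨N, e, he⟩ := exists_realize_in_universe.{u} r
  have helim : Sum.elim (e ∘ Sum.inl) (e ∘ Sum.inr) = e := funext fun x => by cases x <;> rfl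
  refine ⟨N, e ∘ Sum.inl, e ∘ Sum.inr, ?_, ?_, ?_⟩
  · refine (eq_of_subset fun σ hσ => ?_).symm
    have h1 : sMap Sum.inl σ ∈ r := hr (Or.inl (Or.inl ⟨σ, SetLike.mem_coe.2 hσ, rfl⟩))
    rwa [← he, sMap_mem_typeOf] at h1
  · refine (eq_of_subset fun σ hσ => ?_).symm
    have h1 : sMap Sum.inr σ ∈ r := hr (Or.inl (Or.inr ⟨σ, SetLike.mem_coe.2 hσ, rfl⟩))
    rwa [← he, sMap_mem_typeOf] at h1
  · intro i
    have h1 : Formula.equivSentence (φ i) ∈ r := hr (Or.inr ⟨i, rfl⟩)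
    rw [← he, CompleteType.formula_mem_typeOf] at h1
    rwa [helim]

theorem erel_refl {φ : I → L.Formula (Fin n ⊕ Fin n)} (heq : IsInfEqRel.{u} T φ)
    (p : T.CompleteType (Fin n)) : Erel T φ p p := by
  obtain ⟨N, e, he⟩ := exists_realize_in_universe.{u} p
  exact erel_of_realize he he (heq.1 N N.is_model e)

theorem erel_symm {φ : I → L.Formula (Fin n ⊕ Fin n)} (heq : IsInfEqRel.{u} T φ)
    {p q : T.CompleteType (Fin n)} (h : Erel T φ p q) : Erel T φ q p := by
  obtain ⟨N, c, d, hc, hd, hφ⟩ := erel_elim.{u} h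
  exact erel_of_realize hd hc (heq.2.1 N N.is_model c d hφ)

theorem erel_trans {φ : I → L.Formula (Fin n ⊕ Fin n)} (hcomp : T.IsComplete)
    (heq : IsInfEqRel.{u} T φ) (hcoarse : CoarserThanTypeEq.{u} T φ)
    {p q r : T.CompleteType (Fin n)} (h1 : Erel T φ p q) (h2 : Erel T φ q r) :
    Erel T φ p r := by
  obtain ⟨M₁, c, d, hc, hd, hφ1⟩ := erel_elim.{u} h1
  obtain ⟨M₂, d', e', hd', he', hφ2⟩ := erel_elim.{u} h2
  obtain ⟨K, E₁, E₂, hE₁, hE₂⟩ := jointly_realized.{u} hcomp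
    (T.typeOf (Sum.elim c d)) (T.typeOf (Sum.elim d' e'))
  have hd₁ : T.typeOf (E₁ ∘ Sum.inr) = T.typeOf d := by
    have := typeOf_comp_eq_of_typeOf_eq hE₁ Sum.inr
    rwa [Sum.elim_comp_inr] at this
  have hc₁ : T.typeOf (E₁ ∘ Sum.inl) = T.typeOf c := by
    have := typeOf_comp_eq_of_typeOf_eq hE₁ Sum.inl
    rwa [Sum.elim_comp_inl] at this
  have hd₂ : T.typeOf (E₂ ∘ Sum.inl) = T.typeOf d' := by
    have := typeOf_comp_eq_of_typeOf_eq hE₂ Sum.inl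
    rwa [Sum.elim_comp_inl] at this
  have he₂ : T.typeOf (E₂ ∘ Sum.inr) = T.typeOf e' := by
    have := typeOf_comp_eq_of_typeOf_eq hE₂ Sum.inr
    rwa [Sum.elim_comp_inr] at this
  -- the two copies of realizations of q are related
  have hq12 : T.typeOf (E₁ ∘ Sum.inr) = T.typeOf (E₂ ∘ Sum.inl) := by
    rw [hd₁, hd₂, hd, hd']
  have hrel : ∀ i, (φ i).Realize (Sum.elim (E₁ ∘ Sum.inr) (E₂ ∘ Sum.inl)) :=
    hcoarse K K.is_model _ _ fun θ => realize_iff_of_typeOf_eq hq12 θ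
  have hφ1' : ∀ i, (φ i).Realize (Sum.elim (E₁ ∘ Sum.inl) (E₁ ∘ Sum.inr)) := by
    intro i
    have helim : Sum.elim (E₁ ∘ Sum.inl) (E₁ ∘ Sum.inr) = E₁ := funext fun x => by cases x <;> rfl
    rw [helim]
    exact (realize_iff_of_typeOf_eq hE₁ (φ i)).2 (hφ1 i)
  have hφ2' : ∀ i, (φ i).Realize (Sum.elim (E₂ ∘ Sum.inl) (E₂ ∘ Sum.inr)) := by
    intro i
    have helim : Sum.elim (E₂ ∘ Sum.inl) (E₂ ∘ Sum.inr) = E₂ := funext fun x => by cases x <;> rfl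
    rw [helim]
    exact (realize_iff_of_typeOf_eq hE₂ (φ i)).2 (hφ2 i)
  have step1 := heq.2.2 K K.is_model _ _ _ hφ1' hrel
  have step2 := heq.2.2 K K.is_model _ _ _ step1 hφ2'
  exact erel_of_realize (by rw [hc₁, hc]) (by rw [he₂, he']) step2

theorem erel_wellDef {φ : I → L.Formula (Fin n ⊕ Fin n)} (hcomp : T.IsComplete)
    (heq : IsInfEqRel.{u} T φ) (hcoarse : CoarserThanTypeEq.{u} T φ)
    {M₂ : Type u} [L.Structure M₂] [Nonempty M₂] [M₂ ⊨ T] {c d : Fin n → M₂}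
    (h : Erel T φ (T.typeOf c) (T.typeOf d)) : ∀ i, (φ i).Realize (Sum.elim c d) := by
  obtain ⟨M₁, c', d', hc', hd', hφ'⟩ := erel_elim.{u} h
  obtain ⟨K, E₁, E₂, hE₁, hE₂⟩ := jointly_realized.{u} hcomp
    (T.typeOf (Sum.elim c d)) (T.typeOf (Sum.elim c' d'))
  have hc₁ : T.typeOf (E₁ ∘ Sum.inl) = T.typeOf c := by
    have := typeOf_comp_eq_of_typeOf_eq hE₁ Sum.inl
    rwa [Sum.elim_comp_inl] at this
  have hd₁ : T.typeOf (E₁ ∘ Sum.inr) = T.typeOf d := by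
    have := typeOf_comp_eq_of_typeOf_eq hE₁ Sum.inr
    rwa [Sum.elim_comp_inr] at this
  have hc₂ : T.typeOf (E₂ ∘ Sum.inl) = T.typeOf c' := by
    have := typeOf_comp_eq_of_typeOf_eq hE₂ Sum.inl
    rwa [Sum.elim_comp_inl] at this
  have hd₂ : T.typeOf (E₂ ∘ Sum.inr) = T.typeOf d' := by
    have := typeOf_comp_eq_of_typeOf_eq hE₂ Sum.inr
    rwa [Sum.elim_comp_inr] at this
  have hcc : T.typeOf (E₁ ∘ Sum.inl) = T.typeOf (E₂ ∘ Sum.inl) := by rw [hc₁, hc₂, hc']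
  have hdd : T.typeOf (E₁ ∘ Sum.inr) = T.typeOf (E₂ ∘ Sum.inr) := by rw [hd₁, hd₂, hd']
  have hrelc : ∀ i, (φ i).Realize (Sum.elim (E₁ ∘ Sum.inl) (E₂ ∘ Sum.inl)) :=
    hcoarse K K.is_model _ _ fun θ => realize_iff_of_typeOf_eq hcc θ
  have hreld : ∀ i, (φ i).Realize (Sum.elim (E₂ ∘ Sum.inr) (E₁ ∘ Sum.inr)) := by
    refine heq.2.1 K K.is_model _ _ ?_
    exact hcoarse K K.is_model _ _ fun θ => realize_iff_of_typeOf_eq hdd θ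
  have hφ2' : ∀ i, (φ i).Realize (Sum.elim (E₂ ∘ Sum.inl) (E₂ ∘ Sum.inr)) := by
    intro i
    have helim : Sum.elim (E₂ ∘ Sum.inl) (E₂ ∘ Sum.inr) = E₂ := funext fun x => by cases x <;> rfl
    rw [helim]
    exact (realize_iff_of_typeOf_eq hE₂ (φ i)).2 (hφ' i)
  have step1 := heq.2.2 K K.is_model _ _ _ hrelc hφ2'
  have step2 := heq.2.2 K K.is_model _ _ _ step1 hreld
  intro i
  have helim : Sum.elim (E₁ ∘ Sum.inl) (E₁ ∘ Sum.inr) = E₁ := funext fun x => by cases x <;> rfl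
  have := step2 i
  rw [helim] at this
  exact (realize_iff_of_typeOf_eq hE₁ (φ i)).1 this


theorem isClosed_setOf_erel (φ : I → L.Formula (Fin n ⊕ Fin n)) :
    IsClosed {x : T.CompleteType (Fin n) × T.CompleteType (Fin n) | Erel T φ x.1 x.2} := by
  classical
  rw [← isOpen_compl_iff, isOpen_prod_iff]
  intro p q hpq
  set base : L[[Fin n ⊕ Fin n]].Theory :=
    (L.lhomWithConstants (Fin n ⊕ Fin n)).onTheory T ∪
      Set.range fun i => Formula.equivSentence (φ i) with hbase
  set Fst : Finset {σ : L[[Fin n]].Sentence // σ ∈ p} ×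
      Finset {σ : L[[Fin n]].Sentence // σ ∈ q} → L[[Fin n ⊕ Fin n]].Theory := fun s =>
    base ∪ ((fun σ : {σ : L[[Fin n]].Sentence // σ ∈ p} => sMap Sum.inl σ.1) '' ↑s.1 ∪
      (fun σ : {σ : L[[Fin n]].Sentence // σ ∈ q} => sMap Sum.inr σ.1) '' ↑s.2) with hFst
  have hdir : Directed (· ⊆ ·) Fst := by
    apply Monotone.directed_le
    intro s t hst
    exact Set.union_subset_union subset_rfl (Set.union_subset_union
      (Set.image_mono (Finset.coe_subset.2 hst.1))
      (Set.image_mono (Finset.coe_subset.2 hst.2)))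
  have hcov : ErelTheory T φ p q ⊆ ⋃ s, Fst s := by
    rintro σ (hσ | ((⟨τ, hτ, rfl⟩ | ⟨τ, hτ, rfl⟩) | hσ))
    · exact Set.mem_iUnion.2 ⟨(∅, ∅), Or.inl (Or.inl hσ)⟩
    · exact Set.mem_iUnion.2 ⟨({⟨τ, SetLike.mem_coe.1 hτ⟩}, ∅),
        Or.inr (Or.inl ⟨⟨τ, SetLike.mem_coe.1 hτ⟩, by simp, rfl⟩)⟩
    · exact Set.mem_iUnion.2 ⟨(∅, {⟨τ, SetLike.mem_coe.1 hτ⟩}),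
        Or.inr (Or.inr ⟨⟨τ, SetLike.mem_coe.1 hτ⟩, by simp, rfl⟩)⟩
    · exact Set.mem_iUnion.2 ⟨(∅, ∅), Or.inl (Or.inr hσ)⟩
  have hnall : ¬∀ s, (Fst s).IsSatisfiable := fun hall =>
    hpq (((isSatisfiable_directed_union_iff hdir).2 hall).mono hcov)
  push_neg at hnall
  obtain ⟨s, hs⟩ := hnall
  refine ⟨basicOpen T (Fin n) ((s.1.image Subtype.val).toList.foldr (· ⊓ ·) ⊤),
    basicOpen T (Fin n) ((s.2.image Subtype.val).toList.foldr (· ⊓ ·) ⊤),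
    isOpen_basicOpen _, isOpen_basicOpen _, ?_, ?_, ?_⟩
  · refine CompleteType.toList_foldr_inf_mem.2 ?_
    rintro τ hτ
    obtain ⟨⟨τ', hτ'⟩, _, rfl⟩ := Finset.mem_image.1 (Finset.mem_coe.1 hτ)
    exact hτ'
  · refine CompleteType.toList_foldr_inf_mem.2 ?_
    rintro τ hτ
    obtain ⟨⟨τ', hτ'⟩, _, rfl⟩ := Finset.mem_image.1 (Finset.mem_coe.1 hτ)
    exact hτ'
  · rintro ⟨p', q'⟩ ⟨hp', hq'⟩ hrel
    have hp'sub := CompleteType.toList_foldr_inf_mem.1 hp'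
    have hq'sub := CompleteType.toList_foldr_inf_mem.1 hq'
    refine hs (IsSatisfiable.mono hrel ?_)
    rintro σ (hσ | (⟨τ, hτ, rfl⟩ | ⟨τ, hτ, rfl⟩))
    · rcases hσ with hσ | hσ
      · exact Or.inl hσ
      · exact Or.inr (Or.inr hσ)
    · refine Or.inr (Or.inl (Or.inl ⟨τ.1, ?_, rfl⟩))
      exact SetLike.mem_coe.2 (hp'sub (Finset.mem_coe.2 (Finset.mem_image_of_mem _
        (Finset.mem_coe.1 hτ))))
    · refine Or.inr (Or.inl (Or.inr ⟨τ.1, ?_, rfl⟩))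
      exact SetLike.mem_coe.2 (hq'sub (Finset.mem_coe.2 (Finset.mem_image_of_mem _
        (Finset.mem_coe.1 hτ))))

end Erel


section TopologyGeneric

open Cardinal

variable {X : Type*} [TopologicalSpace X]

theorem isClosed_saturation [CompactSpace X] {E : Set (X × X)} (hE : IsClosed E)
    {C : Set X} (hC : IsClosed C) : IsClosed {x | ∃ y ∈ C, (x, y) ∈ E} := by
  rw [← isOpen_compl_iff, isOpen_iff_forall_mem_open]
  intro x hx
  have hsub : ({x} : Set X) ×ˢ C ⊆ Eᶜ := by
    rintro ⟨a, b⟩ ⟨ha, hb⟩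
    rw [Set.mem_singleton_iff] at ha
    subst ha
    exact fun hmem => hx ⟨b, hb, hmem⟩
  obtain ⟨u', v', hu', hv', hxu, hCv, huv⟩ := generalized_tube_lemma isCompact_singleton
    hC.isCompact hE.isOpen_compl hsub
  refine ⟨u', fun z hz => ?_, hu', hxu rfl⟩
  rintro ⟨y, hyC, hyE⟩
  exact huv (Set.mk_mem_prod hz (hCv hyC)) hyE

theorem exists_isClopen_separating [CompactSpace X] [T2Space X] [Countable X]
    {x y : X} (hxy : x ≠ y) : ∃ U : Set X, IsClopen U ∧ x ∈ U ∧ y ∉ U := by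
  obtain ⟨f, hf0, hf1, hficc⟩ := exists_continuous_zero_one_of_isClosed
    (isClosed_singleton (x := x)) (isClosed_singleton (x := y))
    (Set.disjoint_singleton.2 hxy)
  have hrange : ∃ r ∈ Set.Ioo (0 : ℝ) 1, r ∉ Set.range f := by
    by_contra h
    push_neg at h
    have hcnt : (Set.Ioo (0 : ℝ) 1).Countable := (Set.countable_range f).mono h
    rw [← Cardinal.le_aleph0_iff_set_countable, Cardinal.mk_Ioo_real zero_lt_one] at hcnt
    exact absurd hcnt (not_le.2 Cardinal.aleph0_lt_continuum)
  obtain ⟨r, hrIoo, hrns⟩ := hrange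
  have hpre : f ⁻¹' Set.Iio r = f ⁻¹' Set.Iic r := by
    ext z
    simp only [Set.mem_preimage, Set.mem_Iio, Set.mem_Iic]
    constructor
    · exact le_of_lt
    · intro hle
      rcases lt_or_eq_of_le hle with hlt | heq
      · exact hlt
      · exact absurd ⟨z, heq⟩ hrns
  refine ⟨f ⁻¹' Set.Iio r, ⟨?_, isOpen_Iio.preimage f.continuous⟩, ?_, ?_⟩
  · rw [hpre]
    exact isClosed_Iic.preimage f.continuous
  · simp only [Set.mem_preimage, Set.mem_Iio]
    rw [hf0 rfl]
    exact hrIoo.1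
  · simp only [Set.mem_preimage, Set.mem_Iio]
    rw [hf1 rfl]
    exact not_lt.2 hrIoo.2.le

theorem exists_clopen_saturated [CompactSpace X] [T2Space X] [Countable X] (s : Setoid X)
    (hE : IsClosed {x : X × X | s.r x.1 x.2}) {p q : X} (hpq : ¬s.r p q) :
    ∃ U : Set X, IsClopen U ∧ p ∈ U ∧ q ∉ U ∧ ∀ x y, s.r x y → (x ∈ U ↔ y ∈ U) := by
  -- the saturation operator
  let sat : Set X → Set X := fun A => {x | ∃ y ∈ A, s.r x y}
  have hsatClosed : ∀ {A : Set X}, IsClosed A → IsClosed (sat A) := fun hA =>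
    isClosed_saturation hE hA
  have hsatSat : ∀ (A : Set X) (x y : X), s.r x y → (x ∈ sat A ↔ y ∈ sat A) := by
    intro A x y hxy
    constructor
    · rintro ⟨z, hz, hxz⟩
      exact ⟨z, hz, s.trans (s.symm hxy) hxz⟩
    · rintro ⟨z, hz, hyz⟩
      exact ⟨z, hz, s.trans hxy hyz⟩
  -- the quotient is compact, countable and Hausdorff
  haveI : T2Space (Quotient s) := by
    constructor
    intro a b hab
    obtain ⟨x, rfl⟩ := Quotient.exists_rep a
    obtain ⟨y, rfl⟩ := Quotient.exists_rep b
    have hr : ¬s.r x y := fun h => hab (Quotient.sound h)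
    have hK₁ : IsClosed {z | s.r x z} :=
      hE.preimage (Continuous.prodMk_right x)
    have hK₂ : IsClosed {z | s.r y z} :=
      hE.preimage (Continuous.prodMk_right y)
    have hdisj : Disjoint {z | s.r x z} {z | s.r y z} := by
      rw [Set.disjoint_left]
      intro z h1 h2
      exact hr (s.trans h1 (s.symm h2))
    obtain ⟨u, v, hu, hv, hK₁u, hK₂v, huv⟩ := normal_separation hK₁ hK₂ hdisj
    -- saturated open refinements
    let u' := (sat uᶜ)ᶜ
    let v' := (sat vᶜ)ᶜ
    have hu'open : IsOpen u' := (hsatClosed hu.isClosed_compl).isOpen_compl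
    have hv'open : IsOpen v' := (hsatClosed hv.isClosed_compl).isOpen_compl
    have hu'sat : ∀ z w, s.r z w → (z ∈ u' ↔ w ∈ u') := by
      intro z w h
      exact not_congr (hsatSat _ z w h)
    have hv'sat : ∀ z w, s.r z w → (z ∈ v' ↔ w ∈ v') := by
      intro z w h
      exact not_congr (hsatSat _ z w h)
    have hxu' : x ∈ u' := by
      rintro ⟨z, hz, hxz⟩
      exact hz (hK₁u hxz)
    have hyv' : y ∈ v' := by
      rintro ⟨z, hz, hyz⟩
      exact hz (hK₂v hyz)
    have hu'u : u' ⊆ u := by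
      intro z hz
      by_contra hzu
      exact hz ⟨z, hzu, s.refl z⟩
    have hv'v : v' ⊆ v := by
      intro z hz
      by_contra hzv
      exact hz ⟨z, hzv, s.refl z⟩
    refine ⟨Quotient.mk s '' u', Quotient.mk s '' v', ?_, ?_, ⟨x, hxu', rfl⟩, ⟨y, hyv', rfl⟩, ?_⟩
    · rw [← (isQuotientMap_quotient_mk' (s := s)).isOpen_preimage]
      have : Quotient.mk' ⁻¹' (Quotient.mk s '' u') = u' := by
        ext z
        constructor
        · rintro ⟨w, hw, hww⟩
          exact (hu'sat w z (Quotient.exact hww)).1 hw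
        · intro hz
          exact ⟨z, hz, rfl⟩
      rw [this]
      exact hu'open
    · rw [← (isQuotientMap_quotient_mk' (s := s)).isOpen_preimage]
      have : Quotient.mk' ⁻¹' (Quotient.mk s '' v') = v' := by
        ext z
        constructor
        · rintro ⟨w, hw, hww⟩
          exact (hv'sat w z (Quotient.exact hww)).1 hw
        · intro hz
          exact ⟨z, hz, rfl⟩
      rw [this]
      exact hv'open
    · rw [Set.disjoint_left]
      rintro c ⟨z, hz, rfl⟩ ⟨w, hw, hww⟩
      have hr' : s.r w z := Quotient.exact hww
      have : z ∈ v' := (hv'sat w z hr').1 hw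
      exact Set.disjoint_left.1 huv (hu'u hz) (hv'v this)
  -- separate the two classes in the quotient
  have hne : (Quotient.mk s p) ≠ (Quotient.mk s q) := fun h => hpq (Quotient.exact h)
  obtain ⟨C, hC, hpC, hqC⟩ := exists_isClopen_separating hne
  refine ⟨Quotient.mk s ⁻¹' C, ⟨hC.isClosed.preimage continuous_quotient_mk',
    hC.isOpen.preimage continuous_quotient_mk'⟩, hpC, hqC, ?_⟩
  intro x y hxy
  simp only [Set.mem_preimage]
  rw [Quotient.sound hxy]

end TopologyGeneric

end SmallSepAux

/-- Let `T` be a small satisfiable complete theory in a countable language and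
`(φ_i)` an ∞-definable equivalence relation over `∅` modulo `T` coarser than equality of types.
If in some model `M ⊨ T` the tuples `a`, `b` are not related, then there are formulas `χ(x̄)`,
`ψ(x̄)` with `M ⊨ χ(a)`, `M ⊨ ψ(b)`, such that `χ(x̄) ∨ ψ(x̄)` holds of every tuple in every
model of `T`, and `χ(x̄) ∧ ψ(ȳ)` implies the failure of the relation in every model of `T`. -/
theorem exists_separating_formulas_of_not_infEqRel {L : FirstOrder.Language.{v, w}}
    [Countable L.Symbols]
    (T : L.Theory) (hsat : T.IsSatisfiable) (hcomp : T.IsComplete)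
    (hsmall : ∀ k : ℕ, Countable (T.CompleteType (Fin k)))
    {n : ℕ} (hn : 0 < n) {I : Type u'} (φ : I → L.Formula (Fin n ⊕ Fin n))
    (heq : IsInfEqRel.{u} T φ) (hcoarse : CoarserThanTypeEq.{u} T φ)
    (M : Type u) [L.Structure M] [Nonempty M] (hM : M ⊨ T)
    (a b : Fin n → M) (i₀ : I) (hab : ¬(φ i₀).Realize (Sum.elim a b)) :
    ∃ χ ψ : L.Formula (Fin n),
      χ.Realize a ∧ ψ.Realize b ∧
      (∀ (M' : Type u) [L.Structure M'] [Nonempty M'], M' ⊨ T →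
        ∀ c : Fin n → M', χ.Realize c ∨ ψ.Realize c) ∧
      (∀ (M' : Type u) [L.Structure M'] [Nonempty M'], M' ⊨ T →
        ∀ c d : Fin n → M', χ.Realize c → ψ.Realize d →
          ∃ i, ¬(φ i).Realize (Sum.elim c d)) := by
  classical
  letI : M ⊨ T := hM
  haveI : Countable (T.CompleteType (Fin n)) := hsmall n
  -- the induced equivalence relation on the type space
  let s : Setoid (T.CompleteType (Fin n)) :=
    ⟨SmallSepAux.Erel T φ, ⟨fun p => SmallSepAux.erel_refl heq p,
      fun h => SmallSepAux.erel_symm heq h,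
      fun h1 h2 => SmallSepAux.erel_trans hcomp heq hcoarse h1 h2⟩⟩
  have hEclosed : IsClosed {x : T.CompleteType (Fin n) × T.CompleteType (Fin n) |
      s.r x.1 x.2} := SmallSepAux.isClosed_setOf_erel φ
  have hpq : ¬s.r (T.typeOf a) (T.typeOf b) := fun h =>
    hab (SmallSepAux.erel_wellDef (M₂ := M) (c := a) (d := b) hcomp heq hcoarse h i₀)
  obtain ⟨U, hUclopen, hpU, hqU, hUsat⟩ :=
    SmallSepAux.exists_clopen_saturated s hEclosed hpq
  obtain ⟨σ, rfl⟩ := SmallSepAux.exists_eq_basicOpen hUclopen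
  refine ⟨Formula.equivSentence.symm σ, (Formula.equivSentence.symm σ).not, ?_, ?_, ?_, ?_⟩
  · have h1 : σ ∈ T.typeOf a := hpU
    exact (Theory.CompleteType.mem_typeOf (T := T) (v := a)).1 h1
  · rw [Formula.realize_not]
    intro h
    have h1 : σ ∈ T.typeOf b := (Theory.CompleteType.mem_typeOf (T := T) (v := b)).2 h
    exact hqU h1
  · intro M' _ _ hM' c
    rw [Formula.realize_not]
    exact em _
  · intro M' _ _ hM' c d hc hd
    letI : M' ⊨ T := hM'
    by_contra hcon
    push_neg at hcon
    have hrel : s.r (T.typeOf c) (T.typeOf d) :=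
      SmallSepAux.erel_of_realize rfl rfl hcon
    have hcU : T.typeOf c ∈ SmallSepAux.basicOpen T (Fin n) σ :=
      (Theory.CompleteType.mem_typeOf (T := T) (v := c)).2 hc
    have hdU : T.typeOf d ∈ SmallSepAux.basicOpen T (Fin n) σ :=
      (hUsat _ _ hrel).1 hcU
    rw [Formula.realize_not] at hd
    have h1 : σ ∈ T.typeOf d := hdU
    exact hd ((Theory.CompleteType.mem_typeOf (T := T) (v := d)).1 h1)
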